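/- Let n, k ≥ 1, let B = (b₁,…,b_k) be a list of exactly k analytic functions ℂⁿ → ℂ, let f : ℂⁿ → ℂ be analytic, and let z = (z₁,…,z_k) ∈ (ℂⁿ)^k be such that the k×k matrix V_B(z) is invertible. Define p(z,x) := Σ_{i=1}^k f(z_i) L_{B,i}(z,x). Fix x₀ ∈ ℂⁿ, i ∈ {1,…,k}, and j ∈ {1,…,n}. Then the function of one complex variable w ↦ p(z(w), x₀), where z(w) is obtained from z by replacing the j-th coordinate of z_i by w, is complex differentiable at w = (z_i)_j with derivative equal to ( ∂(f − p(z,·))/∂x_j evaluated at z_i ) · L_{B,i}(z, x₀), where ∂/∂x_j denotes the partial derivative of a function ℂⁿ → ℂ with respect to its j-th argument. -/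

import Mathlib

open Matrix

noncomputable section

/-- The (square) generalized Vandermonde matrix `V_B(z)` with `(i,j)` entry `b_j(z_i)`. -/
def vandB {n k : ℕ} (B : Fin k → (Fin n → ℂ) → ℂ) (z : Fin k → Fin n → ℂ) :
    Matrix (Fin k) (Fin k) ℂ :=
  Matrix.of fun i j => B j (z i)

/-- The generalized Lagrange function `L_{B,i}(z,x) = Σ_t (V_B(z)⁻¹)_{t,i} b_t(x)` in the
square case `|B| = k`. -/
def lagB {n k : ℕ} (B : Fin k → (Fin n → ℂ) → ℂ) (z : Fin k → Fin n → ℂ) (i : Fin k)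
    (x : Fin n → ℂ) : ℂ :=
  ∑ t : Fin k, (vandB B z)⁻¹ t i * B t x

/-- `p(z,·) := Σ_i f(z_i) L_{B,i}(z,·)`. -/
def pB {n k : ℕ} (B : Fin k → (Fin n → ℂ) → ℂ) (f : (Fin n → ℂ) → ℂ)
    (z : Fin k → Fin n → ℂ) (x : Fin n → ℂ) : ℂ :=
  ∑ i : Fin k, f (z i) * lagB B z i x

/-- The partial derivative `∂g/∂x_j` of `g : ℂⁿ → ℂ` at `a`. -/
def pderiv' {n : ℕ} (j : Fin n) (g : (Fin n → ℂ) → ℂ) (a : Fin n → ℂ) : ℂ :=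
  deriv (fun w => g (Function.update a j w)) (a j)

lemma diffAt_update {n : ℕ} (a : Fin n → ℂ) (j : Fin n) (w₀ : ℂ) :
    DifferentiableAt ℂ (fun w : ℂ => Function.update a j w) w₀ := by
  rw [differentiableAt_pi]
  intro m
  by_cases h : m = j
  · subst h
    simp only [Function.update_self]
    exact differentiableAt_fun_id
  · simp only [Function.update_apply, if_neg h]
    exact differentiableAt_const _

lemma diffAt_comp_update {n : ℕ} (g : (Fin n → ℂ) → ℂ) (hg : AnalyticOnNhd ℂ g Set.univ)
    (a : Fin n → ℂ) (j : Fin n) (w₀ : ℂ) :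
    DifferentiableAt ℂ (fun w : ℂ => g (Function.update a j w)) w₀ :=
  ((hg _ trivial).differentiableAt).comp w₀ (diffAt_update a j w₀)

/-- for `|B| = k` and `V_B(z)` invertible, the function
`w ↦ p(z[(z_i)_j ← w], x₀)` is complex differentiable at `w = (z_i)_j` with derivative
`(∂(f − p(z,·))/∂x_j)(z_i) · L_{B,i}(z, x₀)`. -/
theorem stmt17 {n k : ℕ} (hn : 1 ≤ n) (hk : 1 ≤ k)
    (B : Fin k → (Fin n → ℂ) → ℂ) (hBa : ∀ t, AnalyticOnNhd ℂ (B t) Set.univ)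
    (f : (Fin n → ℂ) → ℂ) (hf : AnalyticOnNhd ℂ f Set.univ)
    (z : Fin k → Fin n → ℂ) (hz : IsUnit (vandB B z).det)
    (x₀ : Fin n → ℂ) (i : Fin k) (j : Fin n) :
    HasDerivAt
      (fun w : ℂ => pB B f (Function.update z i (Function.update (z i) j w)) x₀)
      (pderiv' j (fun x => f x - pB B f z x) (z i) * lagB B z i x₀)
      (z i j) := by
  classical
  set w₀ : ℂ := z i j with hw₀
  set Z : ℂ → Fin k → Fin n → ℂ :=
    fun w => Function.update z i (Function.update (z i) j w) with hZ
  have hZw₀ : Z w₀ = z := by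
    simp only [hZ, hw₀, Function.update_eq_self]
  have hZa : ∀ (w : ℂ) (a : Fin k),
      Z w a = if a = i then Function.update (z i) j w else z a := by
    intro w a
    simp [hZ, Function.update_apply]
  -- differentiability of each matrix entry
  have hMdiff : ∀ (a b : Fin k), DifferentiableAt ℂ (fun w => B b (Z w a)) w₀ := by
    intro a b
    by_cases h : a = i
    · simp only [hZa, if_pos h]
      exact diffAt_comp_update (B b) (hBa b) (z i) j w₀
    · simp only [hZa, if_neg h]
      exact differentiableAt_const _
  -- differentiability of the determinant
  have hdet : DifferentiableAt ℂ (fun w => (vandB B (Z w)).det) w₀ := by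
    simp only [Matrix.det_apply', vandB, Matrix.of_apply]
    exact DifferentiableAt.fun_sum fun σ _ =>
      DifferentiableAt.const_mul
        (DifferentiableAt.fun_finsetProd fun a _ => hMdiff (σ a) a) _
  have hdet0 : (vandB B (Z w₀)).det ≠ 0 := by
    rw [hZw₀]; exact hz.ne_zero
  -- differentiability of adjugate entries
  have hadj : ∀ t s, DifferentiableAt ℂ (fun w => (vandB B (Z w)).adjugate t s) w₀ := by
    intro t s
    simp only [Matrix.adjugate_apply, Matrix.det_apply', Matrix.updateRow_apply, vandB,
      Matrix.of_apply]
    refine DifferentiableAt.fun_sum fun σ _ => DifferentiableAt.const_mul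
      (DifferentiableAt.fun_finsetProd fun a _ => ?_) _
    by_cases h : σ a = s
    · simp only [if_pos h]
      exact differentiableAt_const _
    · simp only [if_neg h]
      exact hMdiff (σ a) a
  -- differentiability of inverse entries
  have hinveq : ∀ (w : ℂ) (t s : Fin k),
      (vandB B (Z w))⁻¹ t s = ((vandB B (Z w)).det)⁻¹ * (vandB B (Z w)).adjugate t s := by
    intro w t s
    rw [Matrix.inv_def]
    simp [Ring.inverse_eq_inv, Matrix.smul_apply, smul_eq_mul]
  have hinv : ∀ t s, DifferentiableAt ℂ (fun w => (vandB B (Z w))⁻¹ t s) w₀ := by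
    intro t s
    simp only [hinveq]
    exact (hdet.inv hdet0).mul (hadj t s)
  -- differentiability of f ∘ Z
  have hfd : ∀ s, DifferentiableAt ℂ (fun w => f (Z w s)) w₀ := by
    intro s
    by_cases h : s = i
    · simp only [hZa, if_pos h]
      exact diffAt_comp_update f hf (z i) j w₀
    · simp only [hZa, if_neg h]
      exact differentiableAt_const _
  -- the coefficient functions
  set c : ℂ → Fin k → ℂ := fun w t => ∑ s, (vandB B (Z w))⁻¹ t s * f (Z w s) with hc
  have hcdiff : ∀ t, DifferentiableAt ℂ (fun w => c w t) w₀ := by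
    intro t
    exact DifferentiableAt.fun_sum fun s _ => (hinv t s).mul (hfd s)
  set γ : Fin k → ℂ := fun t => deriv (fun w => c w t) w₀ with hγdef
  have hγ : ∀ t, HasDerivAt (fun w => c w t) (γ t) w₀ := fun t => (hcdiff t).hasDerivAt
  -- rewrite pB in terms of c
  have hφ : ∀ (w : ℂ) (x : Fin n → ℂ), pB B f (Z w) x = ∑ t, c w t * B t x := by
    intro w x
    simp only [pB, lagB, hc, Finset.mul_sum, Finset.sum_mul]
    rw [Finset.sum_comm]
    refine Finset.sum_congr rfl fun t _ => Finset.sum_congr rfl fun s _ => by ring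
  -- HasDerivAt for entries with explicit derivatives
  set D : Fin k → Fin k → ℂ :=
    fun s t => if s = i then pderiv' j (B t) (z i) else 0 with hD
  have hMhas : ∀ s t, HasDerivAt (fun w => B t (Z w s)) (D s t) w₀ := by
    intro s t
    by_cases h : s = i
    · simp only [hZa, if_pos h, hD, if_pos h]
      exact (diffAt_comp_update (B t) (hBa t) (z i) j w₀).hasDerivAt
    · simp only [hZa, if_neg h, hD, if_neg h]
      exact hasDerivAt_const _ _
  set F : Fin k → ℂ := fun s => if s = i then pderiv' j f (z i) else 0 with hF
  have hfhas : ∀ s, HasDerivAt (fun w => f (Z w s)) (F s) w₀ := by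
    intro s
    by_cases h : s = i
    · simp only [hZa, if_pos h, hF, if_pos h]
      exact (diffAt_comp_update f hf (z i) j w₀).hasDerivAt
    · simp only [hZa, if_neg h, hF, if_neg h]
      exact hasDerivAt_const _ _
  -- eventually, det ≠ 0
  have hev : ∀ᶠ w in nhds w₀, (vandB B (Z w)).det ≠ 0 :=
    hdet.continuousAt.eventually_ne hdet0
  -- the interpolation identity, eventually
  have key : ∀ s, (fun w => ∑ t, B t (Z w s) * c w t) =ᶠ[nhds w₀] fun w => f (Z w s) := by
    intro s
    filter_upwards [hev] with w hw
    have hu : IsUnit (vandB B (Z w)).det := isUnit_iff_ne_zero.2 hw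
    have h1 : vandB B (Z w) * (vandB B (Z w))⁻¹ = 1 := Matrix.mul_nonsing_inv _ hu
    calc ∑ t, B t (Z w s) * c w t
        = ∑ u, (∑ t, vandB B (Z w) s t * (vandB B (Z w))⁻¹ t u) * f (Z w u) := by
          simp only [hc, vandB, Matrix.of_apply, Finset.mul_sum, Finset.sum_mul, mul_assoc]
          exact Finset.sum_comm
      _ = ∑ u, (1 : Matrix (Fin k) (Fin k) ℂ) s u * f (Z w u) := by
          simp only [← Matrix.mul_apply, h1]
      _ = f (Z w s) := by
          simp [Matrix.one_apply]
  -- derive the linear system satisfied by γ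
  have hsys : ∀ s, ∑ t, (D s t * c w₀ t + B t (Z w₀ s) * γ t) = F s := by
    intro s
    have hL : HasDerivAt (fun w => ∑ t, B t (Z w s) * c w t)
        (∑ t, (D s t * c w₀ t + B t (Z w₀ s) * γ t)) w₀ :=
      HasDerivAt.fun_sum fun t _ => (hMhas s t).mul (hγ t)
    have hR : HasDerivAt (fun w => ∑ t, B t (Z w s) * c w t) (F s) w₀ :=
      (hfhas s).congr_of_eventuallyEq (key s)
    exact hL.unique hR
  -- solve the system: γ = V⁻¹ *ᵥ ρ
  set r : ℂ := pderiv' j f (z i) - ∑ u, pderiv' j (B u) (z i) * c w₀ u with hr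
  set ρ : Fin k → ℂ := fun s => if s = i then r else 0 with hρ
  have hmv : vandB B z *ᵥ γ = ρ := by
    funext s
    have h1 := hsys s
    rw [Finset.sum_add_distrib] at h1
    have h2 : ∑ t, B t (Z w₀ s) * γ t = F s - ∑ t, D s t * c w₀ t :=
      eq_sub_of_add_eq' h1
    rw [hZw₀] at h2
    have h3 : (vandB B z *ᵥ γ) s = ∑ t, B t (z s) * γ t := by
      simp [Matrix.mulVec, dotProduct, vandB]
    rw [h3, h2]
    by_cases h : s = i
    · simp only [hρ, hF, hD, if_pos h, hr]
    · simp only [hρ, hF, hD, if_neg h, zero_mul, Finset.sum_const_zero, sub_zero]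
  have hγeq : ∀ t, γ t = (vandB B z)⁻¹ t i * r := by
    have h4 : γ = (vandB B z)⁻¹ *ᵥ ρ := by
      rw [← hmv, Matrix.mulVec_mulVec, Matrix.nonsing_inv_mul _ hz, Matrix.one_mulVec]
    intro t
    rw [show γ t = ((vandB B z)⁻¹ *ᵥ ρ) t from by rw [← h4]]
    simp [Matrix.mulVec, dotProduct, hρ, mul_ite, Finset.sum_ite_eq]
  -- the main derivative, in raw form
  have hmain : HasDerivAt (fun w : ℂ => pB B f (Z w) x₀) (∑ t, γ t * B t x₀) w₀ :=
    (HasDerivAt.fun_sum fun t _ => (hγ t).mul_const (B t x₀)).congr_of_eventuallyEq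
      (Filter.Eventually.of_forall fun w => hφ w x₀)
  -- identify the derivative value
  have hrepr : ∀ x, pB B f z x = ∑ t, c w₀ t * B t x := by
    intro x
    have := hφ w₀ x
    rwa [hZw₀] at this
  have hfu : HasDerivAt (fun w => f (Function.update (z i) j w)) (pderiv' j f (z i)) (z i j) :=
    (diffAt_comp_update f hf (z i) j (z i j)).hasDerivAt
  have hpz : HasDerivAt (fun w => pB B f z (Function.update (z i) j w))
      (∑ t, c w₀ t * pderiv' j (B t) (z i)) (z i j) := by
    refine HasDerivAt.congr_of_eventuallyEq
      (HasDerivAt.fun_sum fun t _ => HasDerivAt.const_mul (c w₀ t)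
        ((diffAt_comp_update (B t) (hBa t) (z i) j (z i j)).hasDerivAt))
      (Filter.Eventually.of_forall fun w => ?_)
    exact hrepr (Function.update (z i) j w)
  have hpd : pderiv' j (fun x => f x - pB B f z x) (z i) = r := by
    have h5 := (hfu.fun_sub hpz).deriv
    simp only [pderiv'] at h5 ⊢
    rw [h5, hr]
    congr 1
    exact Finset.sum_congr rfl fun u _ => mul_comm _ _
  have hfinal : ∑ t, γ t * B t x₀
      = pderiv' j (fun x => f x - pB B f z x) (z i) * lagB B z i x₀ := by
    rw [hpd, lagB, Finset.mul_sum]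
    refine Finset.sum_congr rfl fun t _ => ?_
    rw [hγeq t]
    ring
  exact hfinal ▸ hmain
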